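/- Let E be a k-dimensional subspace of a Banach space B. Then there exists an inner product ⟨·,·⟩_E on E, with induced norm ‖·‖_E, such that ‖v‖_E ≤ ‖v‖ ≤ √k · ‖v‖_E for every v ∈ E. -/

import Mathlib

open scoped RealInnerProductSpace

lemma john_aux_pow (k : ℕ) {r : ℝ} (h0 : 0 ≤ r) (hr : r ≤ 1) :
    (1 + r)^k * (1 - k*r) ≤ 1 := by
  have hb : 1 - (k:ℝ)*r ≤ (1-r)^k := by
    have := one_add_mul_le_pow (a := -r) (by linarith) k
    calc 1 - (k:ℝ)*r = 1 + (k:ℝ) * (-r) := by ring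
      _ ≤ (1 + -r)^k := this
      _ = (1 - r)^k := by ring_nf
  calc (1+r)^k * (1 - (k:ℝ)*r) ≤ (1+r)^k * (1-r)^k := by
        exact mul_le_mul_of_nonneg_left hb (by positivity)
    _ = ((1+r)*(1-r))^k := (mul_pow _ _ _).symm
    _ = (1 - r^2)^k := by ring_nf
    _ ≤ 1 := pow_le_one₀ (by nlinarith) (by nlinarith)

lemma john_aux_choice (k : ℕ) (hk : 1 ≤ k) {W : ℝ} (hW : (k:ℝ) < W) :
    ∃ c t : ℝ, 0 < c ∧ 0 < t ∧ c^2 * (1 + (2*t+t^2)/W) ≤ 1 ∧ 1 < c^k * (1+t) := by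
  have hk' : (1:ℝ) ≤ (k:ℝ) := by exact_mod_cast hk
  have hW0 : 0 < W := lt_of_le_of_lt (by linarith) hW
  set t : ℝ := min 1 ((W - k)/(4*k)) with ht_def
  have ht0 : 0 < t := lt_min one_pos (div_pos (by linarith) (by positivity))
  have ht1 : t ≤ 1 := min_le_left _ _
  set q : ℝ := 2*t + t^2 with hq_def
  have hq0 : 0 < q := by nlinarith
  have hq3 : q ≤ 3*t := by nlinarith
  have hqlt : (k:ℝ) * q < W - k := by
    have h2 : t ≤ (W - k)/(4*k) := min_le_right _ _
    have h4 : (k:ℝ)*q ≤ 3*(k*t) := by nlinarith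
    have h3 : (k:ℝ)*t ≤ (W-k)/4 := by
      have := mul_le_mul_of_nonneg_left h2 (le_of_lt (lt_of_lt_of_le one_pos hk' : (0:ℝ) < k))
      calc (k:ℝ)*t ≤ (k:ℝ) * ((W-k)/(4*k)) := this
        _ = (W-k)/4 := by field_simp
    nlinarith
  set r : ℝ := q / W with hr_def
  have hr0 : 0 ≤ r := by positivity
  have hkr : (k:ℝ) * r < 1 := by
    rw [hr_def, show (k:ℝ)*(q/W) = (k*q)/W by ring, div_lt_one hW0]
    linarith
  have hr1 : r ≤ 1 := by
    calc r = 1 * r := (one_mul r).symm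
      _ ≤ (k:ℝ) * r := mul_le_mul_of_nonneg_right hk' hr0
      _ ≤ 1 := le_of_lt hkr
  have hpow := john_aux_pow k hr0 hr1
  have hr1' : (0:ℝ) < 1 + r := by linarith
  set c : ℝ := 1 / Real.sqrt (1 + r) with hc_def
  have hc0 : 0 < c := by
    rw [hc_def]
    positivity
  have hc2 : c^2 = 1/(1+r) := by
    rw [hc_def, div_pow, one_pow, Real.sq_sqrt (le_of_lt hr1')]
  refine ⟨c, t, hc0, ht0, ?_, ?_⟩
  · rw [hc2]
    have : (1:ℝ) + (2*t+t^2)/W = 1 + r := by rw [hr_def, hq_def]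
    rw [this, one_div, inv_mul_cancel₀ (ne_of_gt hr1')]
  · have hA0 : 0 < c^k * (1+t) := by positivity
    have hsq : 1 < (c^k * (1+t))^2 := by
      have hck : (c^k)^2 = (1/(1+r))^k := by
        rw [← pow_mul, mul_comm k 2, pow_mul, hc2]
      have key : (1+r)^k < (1+t)^2 := by
        have h1kr : 0 < 1 - (k:ℝ)*r := by linarith
        have hexp : (1:ℝ) < (1+t)^2 * (1 - k*r) := by
          have e1 : (1+t)^2 = 1 + q := by rw [hq_def]; ring
          have e2 : (k:ℝ)*r = (k*q)/W := by rw [hr_def]; ring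
          rw [e1, e2]
          rw [show (1+q)*(1 - k*q/W) = 1 + (q*(W - k - k*q))/W by field_simp; ring]
          have : 0 < (q*(W - k - k*q))/W := by
            apply div_pos _ hW0
            apply mul_pos hq0
            linarith
          linarith
        nlinarith [pow_nonneg hr1'.le k, hpow]
      calc (1:ℝ) = (1+r)^k * (1/(1+r))^k := by
            rw [← mul_pow, mul_one_div, div_self (ne_of_gt hr1'), one_pow]
        _ < (1+t)^2 * (1/(1+r))^k := by
            apply mul_lt_mul_of_pos_right key
            positivity
        _ = (c^k * (1+t))^2 := by rw [mul_pow, hck]; ring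
    nlinarith

/-- determinant of `id + t • (⟪u,·⟫ • u)` for a unit vector `u` is `1 + t`. -/
lemma john_det_aux {k : ℕ} (hk : 1 ≤ k) {u : EuclideanSpace ℝ (Fin k)} (hu : ‖u‖ = 1) (t : ℝ) :
    LinearMap.det (LinearMap.id (R := ℝ) (M := EuclideanSpace ℝ (Fin k)) +
      t • ((LinearMap.toSpanSingleton ℝ _ u).comp (innerₛₗ ℝ u))) = 1 + t := by
  classical
  have j₀ : Fin k := ⟨0, hk⟩
  have hcard : Module.finrank ℝ (EuclideanSpace ℝ (Fin k)) = Fintype.card (Fin k) := by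
    simp [finrank_euclideanSpace]
  have hsub : ∀ i j : (({j₀} : Set (Fin k))), i = j := by
    rintro ⟨i, hi⟩ ⟨j, hj⟩
    simp only [Set.mem_singleton_iff] at hi hj
    subst hi; subst hj; rfl
  have horth : Orthonormal ℝ (Set.restrict {j₀} (fun _ : Fin k => u)) := by
    refine ⟨fun i => by exact hu, fun i j hij => absurd (hsub i j) hij⟩
  obtain ⟨b, hb⟩ := horth.exists_orthonormalBasis_extension_of_card_eq hcard
  have hbj : b j₀ = u := hb j₀ rfl
  set L : EuclideanSpace ℝ (Fin k) →ₗ[ℝ] EuclideanSpace ℝ (Fin k) :=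
      LinearMap.id (R := ℝ) (M := EuclideanSpace ℝ (Fin k)) +
      t • ((LinearMap.toSpanSingleton ℝ _ u).comp (innerₛₗ ℝ u)) with hL_def
  set d : Fin k → ℝ := fun i => if i = j₀ then 1 + t else 1 with hd_def
  have hmat : LinearMap.toMatrix b.toBasis b.toBasis L = Matrix.diagonal d := by
    ext i j
    have hLb : L (b.toBasis j) = b.toBasis j + ((t * if j₀ = j then 1 else 0)) • b.toBasis j₀ := by
      simp only [OrthonormalBasis.coe_toBasis, hL_def, LinearMap.add_apply, LinearMap.id_apply,
        LinearMap.smul_apply, LinearMap.comp_apply, innerₛₗ_apply_apply,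
        LinearMap.toSpanSingleton_apply]
      rw [← hbj, orthonormal_iff_ite.mp b.orthonormal j₀ j, smul_smul]
    rw [LinearMap.toMatrix_apply, hLb, map_add, map_smul, Module.Basis.repr_self, Module.Basis.repr_self]
    simp only [Finsupp.coe_add, Finsupp.coe_smul, Pi.add_apply, Pi.smul_apply,
      Finsupp.single_apply, Matrix.diagonal_apply, hd_def, smul_eq_mul]
    rcases eq_or_ne i j with rfl | hij
    · rcases eq_or_ne i j₀ with rfl | hij0
      · simp
      · simp [hij0, Ne.symm hij0]
    · rcases eq_or_ne j j₀ with rfl | hj0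
      · simp [Ne.symm hij, hij]
      · simp [Ne.symm hij, hij, Ne.symm hj0]
  rw [← LinearMap.det_toMatrix b.toBasis, hmat, Matrix.det_diagonal]
  simp [hd_def, Finset.prod_ite_eq']

set_option maxHeartbeats 2000000 in
set_option synthInstance.maxHeartbeats 400000 in
theorem john_theorem {B : Type*} [NormedAddCommGroup B] [NormedSpace ℝ B]
    (E : Subspace ℝ B) [FiniteDimensional ℝ E] (k : ℕ) (hk : Module.finrank ℝ E = k) :
    ∃ g : E ≃ₗ[ℝ] EuclideanSpace ℝ (Fin k),
      ∀ v : E, ‖g v‖ ≤ ‖v‖ ∧ ‖v‖ ≤ Real.sqrt k * ‖g v‖ := by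
  classical
  rcases Nat.eq_zero_or_pos k with hk0 | hk1
  · subst hk0
    haveI : Subsingleton E := by
      rw [← Module.finrank_zero_iff (R := ℝ)]
      exact hk
    refine ⟨LinearEquiv.ofFinrankEq _ _ (by simp [hk, finrank_euclideanSpace]), fun v => ?_⟩
    have hv : v = 0 := Subsingleton.elim v 0
    subst hv
    simp
  -- main case : 1 ≤ k
  obtain ⟨e₀⟩ : Nonempty (E ≃ₗ[ℝ] EuclideanSpace ℝ (Fin k)) :=
    ⟨LinearEquiv.ofFinrankEq _ _ (by simp [hk, finrank_euclideanSpace])⟩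
  set N : (EuclideanSpace ℝ (Fin k)) → ℝ := fun x => ‖e₀.symm x‖ with hN_def
  have hN0 : ∀ x, 0 ≤ N x := fun x => norm_nonneg _
  have hNsmul : ∀ (c : ℝ) (x : (EuclideanSpace ℝ (Fin k))), N (c • x) = |c| * N x := by
    intro c x
    simp [hN_def, map_smul, norm_smul]
  have hNe : ∀ v : E, N (e₀ v) = ‖v‖ := by
    intro v
    simp [hN_def]
  set S₁ : (EuclideanSpace ℝ (Fin k)) →L[ℝ] E := LinearMap.toContinuousLinearMap (e₀.symm : (EuclideanSpace ℝ (Fin k)) →ₗ[ℝ] E) with hS₁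
  set S₂ : E →L[ℝ] (EuclideanSpace ℝ (Fin k)) := LinearMap.toContinuousLinearMap (e₀ : E →ₗ[ℝ] (EuclideanSpace ℝ (Fin k))) with hS₂
  have hS₁app : ∀ x : (EuclideanSpace ℝ (Fin k)), S₁ x = e₀.symm x := fun x => rfl
  have hS₂app : ∀ v : E, S₂ v = e₀ v := fun v => rfl
  have hrank : Module.finrank ℝ (EuclideanSpace ℝ (Fin k)) = k := finrank_euclideanSpace_fin
  have hN_le : ∀ x, N x ≤ ‖S₁‖ * ‖x‖ := by
    intro x
    have h : N x = ‖S₁ x‖ := by rw [hS₁app]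
    rw [h]
    exact S₁.le_opNorm x
  have hx_le : ∀ x : (EuclideanSpace ℝ (Fin k)), ‖x‖ ≤ ‖S₂‖ * N x := by
    intro x
    have : x = S₂ (e₀.symm x) := by rw [hS₂app]; simp
    calc ‖x‖ = ‖S₂ (e₀.symm x)‖ := by rw [← this]
      _ ≤ ‖S₂‖ * ‖e₀.symm x‖ := S₂.le_opNorm _
      _ = ‖S₂‖ * N x := rfl
  -- the constraint set
  set C : Set ((EuclideanSpace ℝ (Fin k)) →L[ℝ] (EuclideanSpace ℝ (Fin k))) := {T | ∀ x, ‖T x‖ ≤ N x} with hC_def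
  have h0C : (0 : (EuclideanSpace ℝ (Fin k)) →L[ℝ] (EuclideanSpace ℝ (Fin k))) ∈ C := by
    intro x
    simpa using hN0 x
  have hCclosed : IsClosed C := by
    have : C = ⋂ x : (EuclideanSpace ℝ (Fin k)), {T : (EuclideanSpace ℝ (Fin k)) →L[ℝ] (EuclideanSpace ℝ (Fin k)) | ‖T x‖ ≤ N x} := by
      ext T; simp [hC_def, Set.mem_iInter]
    rw [this]
    refine isClosed_iInter fun x => isClosed_le ?_ continuous_const
    exact ((ContinuousLinearMap.apply ℝ (EuclideanSpace ℝ (Fin k)) x).continuous).norm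
  have hCsub : C ⊆ Metric.closedBall 0 ‖S₁‖ := by
    intro T hT
    rw [Metric.mem_closedBall, dist_zero_right]
    exact T.opNorm_le_bound (norm_nonneg S₁) fun x => (hT x).trans (hN_le x)
  have hCcompact : IsCompact C :=
    (ProperSpace.isCompact_closedBall (0 : (EuclideanSpace ℝ (Fin k)) →L[ℝ] (EuclideanSpace ℝ (Fin k))) ‖S₁‖).of_isClosed_subset hCclosed hCsub
  -- the objective function
  set f : ((EuclideanSpace ℝ (Fin k)) →L[ℝ] (EuclideanSpace ℝ (Fin k))) → ℝ := fun T => |LinearMap.det (T : (EuclideanSpace ℝ (Fin k)) →ₗ[ℝ] (EuclideanSpace ℝ (Fin k)))| with hf_def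
  have hfcont : Continuous f := by
    apply Continuous.abs
    set b : Module.Basis (Fin k) ℝ (EuclideanSpace ℝ (Fin k)) := (EuclideanSpace.basisFun (Fin k) ℝ).toBasis with hb_def
    have hdet : ∀ T : (EuclideanSpace ℝ (Fin k)) →L[ℝ] (EuclideanSpace ℝ (Fin k)),
        LinearMap.det (T : (EuclideanSpace ℝ (Fin k)) →ₗ[ℝ] (EuclideanSpace ℝ (Fin k))) = Matrix.det (LinearMap.toMatrix b b (T : (EuclideanSpace ℝ (Fin k)) →ₗ[ℝ] (EuclideanSpace ℝ (Fin k)))) :=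
      fun T => (LinearMap.det_toMatrix b _).symm
    simp only [hdet]
    apply Continuous.matrix_det
    apply continuous_matrix
    intro i j
    have h1 : Continuous fun T : (EuclideanSpace ℝ (Fin k)) →L[ℝ] (EuclideanSpace ℝ (Fin k)) => T (b j) :=
      (ContinuousLinearMap.apply ℝ (EuclideanSpace ℝ (Fin k)) (b j)).continuous
    have h2 : Continuous fun y : (EuclideanSpace ℝ (Fin k)) => b.repr y i :=
      (LinearMap.continuous_of_finiteDimensional ((b.coord i) : (EuclideanSpace ℝ (Fin k)) →ₗ[ℝ] ℝ))
    exact (h2.comp h1).congr fun T => by simp [LinearMap.toMatrix_apply, Module.Basis.coord_apply]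
  obtain ⟨M, hMC, hMmax⟩ := hCcompact.exists_isMaxOn ⟨0, h0C⟩ hfcont.continuousOn
  -- positivity of the maximum
  have hS₂pos : 0 < ‖S₂‖ := by
    haveI : Nontrivial E := Module.nontrivial_of_finrank_pos (R := ℝ) (by rw [hk]; exact hk1)
    obtain ⟨v, hv⟩ := exists_ne (0 : E)
    have hv' : (0:ℝ) < ‖e₀ v‖ := by
      refine norm_pos_iff.mpr ?_
      simpa using hv
    have h4 : ‖e₀ v‖ = ‖S₂ v‖ := by rw [hS₂app]
    have h5 : ‖S₂ v‖ ≤ ‖S₂‖ * ‖v‖ := S₂.le_opNorm v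
    by_contra hle
    push_neg at hle
    have h6 : ‖S₂‖ = 0 := le_antisymm hle S₂.opNorm_nonneg
    rw [h6, zero_mul] at h5
    linarith
  set ε : ℝ := ‖S₂‖⁻¹ with hε
  have hε0 : 0 < ε := inv_pos.mpr hS₂pos
  have hT₀C : (ε • (ContinuousLinearMap.id ℝ (EuclideanSpace ℝ (Fin k)))) ∈ C := by
    intro x
    have := hx_le x
    rw [ContinuousLinearMap.smul_apply, ContinuousLinearMap.id_apply, norm_smul,
      Real.norm_eq_abs, abs_of_pos hε0]
    rw [hε, inv_mul_le_iff₀ hS₂pos]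
    exact this
  have hfT₀ : f (ε • (ContinuousLinearMap.id ℝ (EuclideanSpace ℝ (Fin k)))) = ε ^ k := by
    have h1 : (((ε • (ContinuousLinearMap.id ℝ (EuclideanSpace ℝ (Fin k)))) : (EuclideanSpace ℝ (Fin k)) →L[ℝ] (EuclideanSpace ℝ (Fin k))) : (EuclideanSpace ℝ (Fin k)) →ₗ[ℝ] (EuclideanSpace ℝ (Fin k)))
        = ε • (LinearMap.id : (EuclideanSpace ℝ (Fin k)) →ₗ[ℝ] (EuclideanSpace ℝ (Fin k))) := by
      ext x
      simp
    show |LinearMap.det (((ε • (ContinuousLinearMap.id ℝ (EuclideanSpace ℝ (Fin k)))) : (EuclideanSpace ℝ (Fin k)) →L[ℝ] (EuclideanSpace ℝ (Fin k))) : (EuclideanSpace ℝ (Fin k)) →ₗ[ℝ] (EuclideanSpace ℝ (Fin k)))| = ε ^ k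
    rw [h1, LinearMap.det_smul, LinearMap.det_id, mul_one, hrank]
    exact abs_of_pos (pow_pos hε0 k)
  have hfM_pos : 0 < f M := by
    have h4 : f (ε • (ContinuousLinearMap.id ℝ (EuclideanSpace ℝ (Fin k)))) ≤ f M := hMmax hT₀C
    rw [hfT₀] at h4
    exact lt_of_lt_of_le (pow_pos hε0 k) h4
  have hMdet : LinearMap.det (M : (EuclideanSpace ℝ (Fin k)) →ₗ[ℝ] (EuclideanSpace ℝ (Fin k))) ≠ 0 := by
    intro h
    have h2 : f M = 0 := by
      show |LinearMap.det (M : (EuclideanSpace ℝ (Fin k)) →ₗ[ℝ] (EuclideanSpace ℝ (Fin k)))| = 0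
      rw [h, abs_zero]
    rw [h2] at hfM_pos
    exact lt_irrefl 0 hfM_pos
  set Mₑ : (EuclideanSpace ℝ (Fin k)) ≃ₗ[ℝ] (EuclideanSpace ℝ (Fin k)) := LinearMap.equivOfDetNeZero _ hMdet with hMₑ
  have hMeapp : ∀ x, Mₑ x = M x := by
    intro x
    rw [hMₑ]
    exact LinearEquiv.ofIsUnitDet_apply _ x
  -- the key claim
  have hkey : ∀ x : (EuclideanSpace ℝ (Fin k)), N x ≤ Real.sqrt k * ‖M x‖ := by
    by_contra hcon
    push_neg at hcon
    obtain ⟨x₀, hx₀⟩ := hcon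
    have hNx₀ : 0 < N x₀ := lt_of_le_of_lt (by positivity) hx₀
    set x₁ : EuclideanSpace ℝ (Fin k) := (N x₀)⁻¹ • x₀ with hx₁def
    have hNx₁ : N x₁ = 1 := by
      rw [hx₁def, hNsmul, abs_of_pos (inv_pos.mpr hNx₀), inv_mul_cancel₀ (ne_of_gt hNx₀)]
    have hMx₁ : Real.sqrt k * ‖M x₁‖ < 1 := by
      rw [hx₁def, map_smul, norm_smul, Real.norm_eq_abs, abs_of_pos (inv_pos.mpr hNx₀)]
      have h9 := mul_lt_mul_of_pos_left hx₀ (inv_pos.mpr hNx₀)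
      rw [inv_mul_cancel₀ (ne_of_gt hNx₀)] at h9
      rw [show Real.sqrt k * ((N x₀)⁻¹ * ‖M x₀‖) = (N x₀)⁻¹ * (Real.sqrt k * ‖M x₀‖) by ring]
      exact h9
    set v₀ : E := e₀.symm x₁ with hv₀def
    have hv₀n : ‖v₀‖ = 1 := hNx₁
    have hv₀ : v₀ ≠ 0 := by
      intro h
      rw [h] at hv₀n
      simp at hv₀n
    obtain ⟨φ, hφ1, hφv⟩ := exists_dual_vector ℝ v₀ (norm_ne_zero_iff.mpr hv₀)
    set ψ : (EuclideanSpace ℝ (Fin k)) →ₗ[ℝ] ℝ :=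
      (φ.toLinearMap.comp (e₀.symm.toLinearMap)).comp (Mₑ.symm.toLinearMap) with hψdef
    set w : EuclideanSpace ℝ (Fin k) :=
      (InnerProductSpace.toDual ℝ (EuclideanSpace ℝ (Fin k))).symm
        (LinearMap.toContinuousLinearMap ψ) with hwdef
    have hwinner : ∀ z : EuclideanSpace ℝ (Fin k), ⟪w, z⟫ = ψ z := by
      intro z
      rw [hwdef]
      exact InnerProductSpace.toDual_symm_apply
    have hψM : ∀ x : EuclideanSpace ℝ (Fin k), ψ (M x) = φ (e₀.symm x) := by
      intro x
      have h1 : Mₑ.symm (M x) = x := by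
        rw [← hMeapp x]
        exact Mₑ.symm_apply_apply x
      rw [hψdef]
      simp only [LinearMap.comp_apply, LinearEquiv.coe_coe, ContinuousLinearMap.coe_coe, h1]
    have h1 : ⟪w, M x₁⟫ = 1 := by
      rw [hwinner, hψM]
      have : φ (e₀.symm x₁) = φ v₀ := by rw [hv₀def]
      rw [this, hφv, hv₀n]
      norm_num
    have h2 : ∀ x : EuclideanSpace ℝ (Fin k), |⟪w, M x⟫| ≤ N x := by
      intro x
      rw [hwinner, hψM]
      calc |φ (e₀.symm x)| = ‖φ (e₀.symm x)‖ := (Real.norm_eq_abs _).symm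
        _ ≤ ‖φ‖ * ‖e₀.symm x‖ := φ.le_opNorm _
        _ = N x := by rw [hφ1, one_mul]
    have hw0 : w ≠ 0 := by
      intro h
      rw [h] at h1
      simp at h1
    have hwn : 0 < ‖w‖ := norm_pos_iff.mpr hw0
    set W : ℝ := ‖w‖^2 with hWdef
    have hW0 : 0 < W := by rw [hWdef]; positivity
    have hWk : (k:ℝ) < W := by
      have hcs : ⟪w, M x₁⟫ ≤ ‖w‖ * ‖M x₁‖ := real_inner_le_norm w (M x₁)
      rw [h1] at hcs
      have hsq : Real.sqrt k < ‖w‖ := by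
        nlinarith [norm_nonneg (M x₁), Real.sqrt_nonneg (k:ℝ)]
      have hkk : (k:ℝ) = Real.sqrt k * Real.sqrt k :=
        (Real.mul_self_sqrt (Nat.cast_nonneg k)).symm
      rw [hWdef]
      nlinarith [Real.sqrt_nonneg (k:ℝ)]
    obtain ⟨c, t, hc0, ht0, hcon2, hdet2⟩ := john_aux_choice k hk1 hWk
    set u : EuclideanSpace ℝ (Fin k) := ‖w‖⁻¹ • w with hudef
    have hun : ‖u‖ = 1 := by
      rw [hudef, norm_smul, Real.norm_eq_abs, abs_of_pos (inv_pos.mpr hwn),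
        inv_mul_cancel₀ (ne_of_gt hwn)]
    set P : (EuclideanSpace ℝ (Fin k)) →ₗ[ℝ] (EuclideanSpace ℝ (Fin k)) :=
      (LinearMap.toSpanSingleton ℝ _ u).comp (innerₛₗ ℝ u) with hPdef
    set L : (EuclideanSpace ℝ (Fin k)) →ₗ[ℝ] (EuclideanSpace ℝ (Fin k)) :=
      LinearMap.id + t • P with hLdef
    have hdetL : LinearMap.det L = 1 + t := john_det_aux hk1 hun t
    have hLz : ∀ z : EuclideanSpace ℝ (Fin k), L z = z + ((t * ⟪w, z⟫)/W) • w := by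
      intro z
      rw [hLdef]
      simp only [LinearMap.add_apply, LinearMap.id_apply, LinearMap.smul_apply, hPdef,
        LinearMap.comp_apply, innerₛₗ_apply_apply, LinearMap.toSpanSingleton_apply]
      rw [hudef, real_inner_smul_left, smul_smul, smul_smul]
      congr 1
      rw [hWdef]
      field_simp
    set M' : (EuclideanSpace ℝ (Fin k)) →L[ℝ] (EuclideanSpace ℝ (Fin k)) :=
      c • ((LinearMap.toContinuousLinearMap L).comp M) with hM'def
    have hM'app : ∀ x, M' x = c • (L (M x)) := by
      intro x
      rw [hM'def]
      simp only [ContinuousLinearMap.smul_apply, ContinuousLinearMap.comp_apply,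
        LinearMap.coe_toContinuousLinearMap', ContinuousLinearMap.coe_coe]
    have hq0' : (0:ℝ) ≤ 2*t + t^2 := add_nonneg (by linarith) (sq_nonneg t)
    have hM'C : M' ∈ C := by
      intro x
      have hz : ‖M x‖ ≤ N x := hMC x
      have hβ : |⟪w, M x⟫| ≤ N x := h2 x
      have hβ2 : ⟪w, M x⟫^2 ≤ (N x)^2 := by
        rw [← sq_abs]
        exact pow_le_pow_left₀ (abs_nonneg _) hβ 2
      have hnormsq : ‖L (M x)‖^2 = ‖M x‖^2 + (2*t + t^2) * ⟪w, M x⟫^2 / W := by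
        rw [hLz (M x), norm_add_sq_real, real_inner_smul_right, real_inner_comm (M x) w,
          norm_smul, Real.norm_eq_abs, mul_pow, sq_abs]
        rw [show ‖w‖^2 = W from hWdef.symm]
        field_simp
        ring
      have hfin : ‖M' x‖^2 ≤ (N x)^2 := by
        rw [hM'app, norm_smul, Real.norm_eq_abs, abs_of_pos hc0, mul_pow, hnormsq]
        have h7 : (2*t+t^2)*⟪w, M x⟫^2/W ≤ (2*t+t^2)*(N x)^2/W := by
          gcongr
        have hzsq : ‖M x‖^2 ≤ (N x)^2 := pow_le_pow_left₀ (norm_nonneg _) hz 2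
        calc c^2 * (‖M x‖^2 + (2*t+t^2)*⟪w, M x⟫^2/W)
            ≤ c^2 * ((N x)^2 + (2*t+t^2)*(N x)^2/W) := by
              apply mul_le_mul_of_nonneg_left (by linarith) (by positivity)
          _ = (c^2 * (1 + (2*t+t^2)/W)) * (N x)^2 := by field_simp
          _ ≤ 1 * (N x)^2 := mul_le_mul_of_nonneg_right hcon2 (sq_nonneg _)
          _ = (N x)^2 := one_mul _
      have h8 := Real.sqrt_le_sqrt hfin
      rwa [Real.sqrt_sq (norm_nonneg _), Real.sqrt_sq (hN0 x)] at h8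
    have hdetM' : LinearMap.det ((M' : (EuclideanSpace ℝ (Fin k)) →ₗ[ℝ] (EuclideanSpace ℝ (Fin k))))
        = c^k * ((1+t) * LinearMap.det ((M : (EuclideanSpace ℝ (Fin k)) →ₗ[ℝ] (EuclideanSpace ℝ (Fin k))))) := by
      have hcoe : ((M' : (EuclideanSpace ℝ (Fin k)) →L[ℝ] (EuclideanSpace ℝ (Fin k))) :
          (EuclideanSpace ℝ (Fin k)) →ₗ[ℝ] (EuclideanSpace ℝ (Fin k)))
          = c • (L.comp ((M : (EuclideanSpace ℝ (Fin k)) →ₗ[ℝ] (EuclideanSpace ℝ (Fin k))))) := by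
        ext x
        simp [hM'def]
      rw [hcoe, LinearMap.det_smul, hrank, LinearMap.det_comp, hdetL]
    have hfM' : f M' ≤ f M := hMmax hM'C
    have h10 : f M' = c^k * ((1+t) * f M) := by
      show |LinearMap.det ((M' : (EuclideanSpace ℝ (Fin k)) →ₗ[ℝ] (EuclideanSpace ℝ (Fin k))))| = _
      rw [hdetM', abs_mul, abs_mul, abs_of_pos (pow_pos hc0 k),
        abs_of_pos (by linarith : (0:ℝ) < 1+t)]
    have h11 : f M < f M' := by
      rw [h10, ← mul_assoc]
      calc f M = 1 * f M := (one_mul _).symm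
        _ < (c^k * (1+t)) * f M := mul_lt_mul_of_pos_right hdet2 hfM_pos
    exact absurd hfM' (not_le.mpr h11)
  -- conclusion
  refine ⟨e₀.trans Mₑ, fun v => ?_⟩
  constructor
  · have h1 : (e₀.trans Mₑ) v = M (e₀ v) := by
      rw [LinearEquiv.trans_apply, hMeapp]
    rw [h1, ← hNe v]
    exact hMC (e₀ v)
  · have h1 : (e₀.trans Mₑ) v = M (e₀ v) := by
      rw [LinearEquiv.trans_apply, hMeapp]
    rw [h1, ← hNe v]
    exact hkey (e₀ v)
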